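/- QMMSE solution: Let σ² > 0, Γ positive diagonal, and C̊² = (σ²+1)Γ² + 2Γ + I. The diagonal A minimizing V(A) = σ²(1 - tr(AΓ))² + ||A C̊||_F² is A = σ² Γ C̊^{-2} / (1 + σ² ||Γ C̊^{-1}||_F²), and the minimum value of V is σ²/(1 + σ² ||Γ C̊^{-1}||_F²). -/

import Mathlib

/-- QMMSE: with `Γ = diag γ` positive, `σ² > 0`,
`C̊² = (σ²+1)Γ² + 2Γ + I` diagonal with entries `c2 n`, the diagonal matrix
`A = diag a` minimizing `V(a) = σ²(1 - tr (A Γ))² + ‖A C̊‖_F²` is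
`A = σ² Γ C̊⁻² / (1 + σ² ‖Γ C̊⁻¹‖_F²)`, and the minimum value of `V` is
`σ² / (1 + σ² ‖Γ C̊⁻¹‖_F²)`. -/
theorem qmmse_minimizer
    (N : ℕ) (γ : Fin N → ℝ) (hγ : ∀ n, 0 < γ n)
    (σ2 : ℝ) (hσ2 : 0 < σ2)
    (c2 : Fin N → ℝ) (hc2 : ∀ n, c2 n = (σ2 + 1) * (γ n) ^ 2 + 2 * γ n + 1)
    (S : ℝ) (hS : S = ∑ n, (γ n) ^ 2 / c2 n)
    (astar : Fin N → ℝ) (hastar : ∀ n, astar n = σ2 * γ n / c2 n / (1 + σ2 * S)) :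
    (σ2 * (1 - ∑ n, astar n * γ n) ^ 2 + ∑ n, (astar n) ^ 2 * c2 n
        = σ2 / (1 + σ2 * S)) ∧
    (∀ a : Fin N → ℝ,
      σ2 / (1 + σ2 * S)
        ≤ σ2 * (1 - ∑ n, a n * γ n) ^ 2 + ∑ n, (a n) ^ 2 * c2 n) := by
  have hc2pos : ∀ n, 0 < c2 n := by
    intro n
    rw [hc2]
    nlinarith [hγ n, sq_nonneg (γ n), hσ2]
  have hSnn : 0 ≤ S := by
    rw [hS]
    exact Finset.sum_nonneg fun n _ => div_nonneg (sq_nonneg _) (hc2pos n).le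
  have hD : 0 < 1 + σ2 * S := by nlinarith
  constructor
  · have h1 : ∑ n, astar n * γ n = σ2 / (1 + σ2 * S) * S := by
      have e : ∀ n : Fin N, astar n * γ n = σ2 / (1 + σ2 * S) * ((γ n) ^ 2 / c2 n) := by
        intro n
        rw [hastar n]
        have hc := (hc2pos n).ne'
        clear hS hastar
        field_simp
      rw [Finset.sum_congr rfl fun n _ => e n, ← Finset.mul_sum, ← hS]
    have h2 : ∑ n, (astar n) ^ 2 * c2 n = σ2 ^ 2 / (1 + σ2 * S) ^ 2 * S := by
      have e : ∀ n : Fin N,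
          (astar n) ^ 2 * c2 n = σ2 ^ 2 / (1 + σ2 * S) ^ 2 * ((γ n) ^ 2 / c2 n) := by
        intro n
        rw [hastar n]
        have hc := (hc2pos n).ne'
        clear hS hastar
        field_simp
      rw [Finset.sum_congr rfl fun n _ => e n, ← Finset.mul_sum, ← hS]
    rw [h1, h2]
    field_simp
    ring
  · intro a
    set t := ∑ n, a n * γ n with ht
    set Q := ∑ n, (a n) ^ 2 * c2 n with hQ
    have hQnn : 0 ≤ Q := by
      rw [hQ]
      exact Finset.sum_nonneg fun n _ => mul_nonneg (sq_nonneg _) (hc2pos n).le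
    have hcs : t ^ 2 ≤ Q * S := by
      rw [ht, hQ, hS]
      have key2 := Finset.sum_mul_sq_le_sq_mul_sq Finset.univ
        (fun n => a n * Real.sqrt (c2 n)) (fun n => γ n / Real.sqrt (c2 n))
      have e1 : ∀ n : Fin N,
          (a n * Real.sqrt (c2 n)) * (γ n / Real.sqrt (c2 n)) = a n * γ n := by
        intro n
        have hs : Real.sqrt (c2 n) ≠ 0 := ne_of_gt (Real.sqrt_pos.mpr (hc2pos n))
        field_simp
      have e2 : ∀ n : Fin N, (a n * Real.sqrt (c2 n)) ^ 2 = (a n) ^ 2 * c2 n := by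
        intro n
        rw [mul_pow, Real.sq_sqrt (hc2pos n).le]
      have e3 : ∀ n : Fin N, (γ n / Real.sqrt (c2 n)) ^ 2 = (γ n) ^ 2 / c2 n := by
        intro n
        rw [div_pow, Real.sq_sqrt (hc2pos n).le]
      simp only [e1, e2, e3] at key2
      exact key2
    rw [div_le_iff₀ hD]
    by_cases hS0 : S = 0
    · have ht0 : t = 0 := by
        have : t ^ 2 ≤ 0 := by rw [hS0] at hcs; linarith
        nlinarith [sq_nonneg t]
      rw [hS0, ht0]
      ring_nf
      nlinarith
    · have hSpos : 0 < S := lt_of_le_of_ne hSnn (Ne.symm hS0)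
      nlinarith [sq_nonneg ((1 + σ2 * S) * t - σ2 * S), mul_pos hD hSpos,
        mul_nonneg hQnn hSpos.le, sq_nonneg (1 - t)]
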